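/- Let G be a connected, edge-critical, triangle-free graph and v a vertex of degree 2. Then the graph G_v obtained by deleting v and its two neighbours (and all incident edges) is connected. -/

import Mathlib

open SimpleGraph

/-- The independence number of a graph. -/
noncomputable def indepNumOld {V : Type} (G : SimpleGraph V) : ℕ :=
  sSup {n : ℕ | ∃ s : Set V, s.Finite ∧ s.ncard = n ∧ ∀ a ∈ s, ∀ b ∈ s, ¬ G.Adj a b}

/-- The number of edges of a graph. -/
noncomputable def numEdges {V : Type} (G : SimpleGraph V) : ℕ := G.edgeSet.ncard

/-- The degree (valency) of a vertex. -/
noncomputable def deg {V : Type} (G : SimpleGraph V) (v : V) : ℕ := (G.neighborSet v).ncard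

/-- The second valency `d²(v) = ∑_{w ∈ N(v)} d(w)`. -/
noncomputable def secondDeg {V : Type} (G : SimpleGraph V) (v : V) : ℕ :=
  ∑ᶠ w ∈ G.neighborSet v, deg G w

/-- `p = (a,b,c,d)` is an (ordered) 4-cycle of `G`. -/
def IsC4 {V : Type} (G : SimpleGraph V) (p : V × V × V × V) : Prop :=
  G.Adj p.1 p.2.1 ∧ G.Adj p.2.1 p.2.2.1 ∧ G.Adj p.2.2.1 p.2.2.2 ∧
    G.Adj p.2.2.2 p.1 ∧ p.1 ≠ p.2.2.1 ∧ p.2.1 ≠ p.2.2.2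

/-- The number of 4-cycles of `G`; each 4-cycle yields 8 ordered tuples. -/
noncomputable def numC4 {V : Type} (G : SimpleGraph V) : ℕ :=
  {p : V × V × V × V | IsC4 G p}.ncard / 8

/-- The number of 4-cycles of `G` containing a vertex of `S`. -/
noncomputable def numC4Through {V : Type} (G : SimpleGraph V) (S : Set V) : ℕ :=
  {p : V × V × V × V | IsC4 G p ∧ (p.1 ∈ S ∨ p.2.1 ∈ S ∨ p.2.2.1 ∈ S ∨ p.2.2.2 ∈ S)}.ncard / 8

/-- The invariant `ν(G) = 3e(G) − 17n(G) + 35α(G) + N(C₄;G)`. -/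
noncomputable def nu {V : Type} (G : SimpleGraph V) : ℤ :=
  3 * (numEdges G : ℤ) - 17 * (Nat.card V : ℤ) + 35 * (indepNumOld G : ℤ) + (numC4 G : ℤ)

/-- The closed neighbourhood `N[v]`. -/
def closedNbhd {V : Type} (G : SimpleGraph V) (v : V) : Set V := insert v (G.neighborSet v)

/-- `S` destabilises `G` : removing `S` decreases the independence number. -/
def Destab {V : Type} (G : SimpleGraph V) (S : Set V) : Prop :=
  indepNumOld (G.induce Sᶜ) < indepNumOld G

/-- `G` is edge-critical (α-critical): removing any edge increases the independence number. -/
def EdgeCritical {V : Type} (G : SimpleGraph V) : Prop :=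
  ∀ e ∈ G.edgeSet, indepNumOld G < indepNumOld (G.deleteEdges {e})

section Aux

variable {V : Type} [Fintype V]

private lemma indep_bdd (G : SimpleGraph V) :
    BddAbove {n : ℕ | ∃ s : Set V, s.Finite ∧ s.ncard = n ∧ ∀ a ∈ s, ∀ b ∈ s, ¬ G.Adj a b} := by
  refine ⟨Fintype.card V, fun n hn => ?_⟩
  obtain ⟨s, hf, rfl, -⟩ := hn
  simpa [Set.ncard_univ, Nat.card_eq_fintype_card] using
    Set.ncard_le_ncard (Set.subset_univ s) Set.finite_univ

private lemma ncard_le_indepNum (G : SimpleGraph V) (s : Set V)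
    (h : ∀ a ∈ s, ∀ b ∈ s, ¬ G.Adj a b) : s.ncard ≤ indepNumOld G :=
  le_csSup (indep_bdd G) ⟨s, s.toFinite, rfl, h⟩

private lemma exists_max_indep (G : SimpleGraph V) :
    ∃ s : Set V, (∀ a ∈ s, ∀ b ∈ s, ¬ G.Adj a b) ∧ s.ncard = indepNumOld G := by
  have h := Nat.sSup_mem
    (s := {n : ℕ | ∃ s : Set V, s.Finite ∧ s.ncard = n ∧ ∀ a ∈ s, ∀ b ∈ s, ¬ G.Adj a b})
    ⟨0, ∅, Set.finite_empty, by simp, by simp⟩ (indep_bdd G)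
  obtain ⟨s, _, hn, hi⟩ := h
  exact ⟨s, hi, hn⟩

/-- Key extraction from edge-criticality: from an edge `p q` with `p` a neighbour of the
bivalent vertex `v` and `q` outside `N[v]`, get an independent set `P ⊆ N[v]ᶜ` of size
`≥ α - 1` avoiding `N(p')` and meeting `N(p)` only possibly at `q`. -/
private lemma key (G : SimpleGraph V) (hec : EdgeCritical G)
    (v p p' q : V) (hN : G.neighborSet v = {p, p'}) (hpp' : p ≠ p')
    (hq : q ∈ (closedNbhd G v)ᶜ) (hadj : G.Adj p q) :
    ∃ P : Set V, P ⊆ (closedNbhd G v)ᶜ ∧ (∀ a ∈ P, ∀ b ∈ P, ¬ G.Adj a b) ∧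
      indepNumOld G + 1 ≤ P.ncard + 2 ∧ (∀ w ∈ P, ¬ G.Adj p' w) ∧
      (∀ w ∈ P, G.Adj p w → w = q) := by
  classical
  have hvp : G.Adj v p := by rw [← SimpleGraph.mem_neighborSet, hN]; exact Or.inl rfl
  have hvp' : G.Adj v p' := by rw [← SimpleGraph.mem_neighborSet, hN]; exact Or.inr rfl
  have hqmem : q ≠ v ∧ q ≠ p ∧ q ≠ p' := by
    have := hq
    simp only [closedNbhd, hN, Set.mem_compl_iff, Set.mem_insert_iff] at this
    push_neg at this
    exact this
  obtain ⟨hqv, hqp, hqp'⟩ := hqmem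
  have hvq : v ≠ q := Ne.symm hqv
  have hvne_p : v ≠ p := G.ne_of_adj hvp
  have hvne_p' : v ≠ p' := G.ne_of_adj hvp'
  set G' := G.deleteEdges {s(p, q)} with hG'
  have hlt : indepNumOld G < indepNumOld G' := hec s(p, q) (G.mem_edgeSet.mpr hadj)
  obtain ⟨S, hSind, hScard⟩ := exists_max_indep G'
  have hScard' : indepNumOld G + 1 ≤ S.ncard := by omega
  -- adjacency in G' for pairs other than {p,q}
  have hG'adj : ∀ a b : V, G.Adj a b → ¬(a = p ∧ b = q) → ¬(a = q ∧ b = p) → G'.Adj a b := by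
    intro a b hab h1 h2
    rw [hG', SimpleGraph.deleteEdges_adj]
    refine ⟨hab, ?_⟩
    simp only [Set.mem_singleton_iff, Sym2.eq_iff]
    tauto
  -- p ∈ S and q ∈ S
  have hpqS : p ∈ S ∧ q ∈ S := by
    by_contra hcon
    have hSG : ∀ a ∈ S, ∀ b ∈ S, ¬ G.Adj a b := by
      intro a ha b hb hab
      refine hSind a ha b hb (hG'adj a b hab ?_ ?_)
      · rintro ⟨rfl, rfl⟩; exact hcon ⟨ha, hb⟩
      · rintro ⟨rfl, rfl⟩; exact hcon ⟨hb, ha⟩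
    have := ncard_le_indepNum G S hSG
    omega
  obtain ⟨hpS, hqS⟩ := hpqS
  -- v ∉ S
  have hvS : v ∉ S := by
    intro hvS
    exact hSind v hvS p hpS (hG'adj v p hvp (by tauto) (fun h => hvq h.1))
  -- p' ∈ S
  have hp'S : p' ∈ S := by
    by_contra hp'S
    set T := insert v (S \ {p}) with hT
    have hTind : ∀ a ∈ T, ∀ b ∈ T, ¬ G.Adj a b := by
      intro a ha b hb hab
      simp only [hT, Set.mem_insert_iff, Set.mem_diff, Set.mem_singleton_iff] at ha hb
      rcases ha with rfl | ⟨haS, hap⟩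
      · rcases hb with rfl | ⟨hbS, hbp⟩
        · exact G.irrefl hab
        · have : b ∈ G.neighborSet a := hab
          rw [hN] at this
          rcases this with rfl | rfl
          · exact hbp rfl
          · exact hp'S hbS
      · rcases hb with rfl | ⟨hbS, hbp⟩
        · have : a ∈ G.neighborSet b := hab.symm
          rw [hN] at this
          rcases this with rfl | rfl
          · exact hap rfl
          · exact hp'S haS
        · refine hSind a haS b hbS (hG'adj a b hab ?_ ?_)
          · rintro ⟨rfl, -⟩; exact hap rfl
          · rintro ⟨-, rfl⟩; exact hbp rfl
    have hcard : T.ncard = S.ncard - 1 + 1 := by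
      rw [hT, Set.ncard_insert_of_notMem (by simp [hvS]),
        Set.ncard_diff_singleton_of_mem hpS]
    have := ncard_le_indepNum G T hTind
    omega
  -- the set P
  refine ⟨S \ {p, p'}, ?_, ?_, ?_, ?_, ?_⟩
  · intro w hw
    simp only [Set.mem_diff, Set.mem_insert_iff, Set.mem_singleton_iff] at hw
    obtain ⟨hwS, hw2⟩ := hw
    push_neg at hw2
    simp only [closedNbhd, hN, Set.mem_compl_iff, Set.mem_insert_iff, Set.mem_singleton_iff]
    push_neg
    exact ⟨fun h => hvS (h ▸ hwS), hw2⟩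
  · intro a ha b hb hab
    simp only [Set.mem_diff, Set.mem_insert_iff, Set.mem_singleton_iff] at ha hb
    push_neg at ha hb
    refine hSind a ha.1 b hb.1 (hG'adj a b hab ?_ ?_)
    · rintro ⟨rfl, -⟩; exact ha.2.1 rfl
    · rintro ⟨-, rfl⟩; exact hb.2.1 rfl
  · have hsub : {p, p'} ⊆ S := by
      intro w hw; rcases hw with rfl | hw
      · exact hpS
      · rw [Set.mem_singleton_iff] at hw; exact hw ▸ hp'S
    have h2 : ({p, p'} : Set V).ncard = 2 := Set.ncard_pair hpp'
    have hd := Set.ncard_diff hsub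
    have h2le : 2 ≤ S.ncard := by
      have := Set.ncard_le_ncard hsub
      omega
    omega
  · intro w hw habs
    simp only [Set.mem_diff, Set.mem_insert_iff, Set.mem_singleton_iff] at hw
    push_neg at hw
    refine hSind p' hp'S w hw.1 (hG'adj p' w habs ?_ ?_)
    · rintro ⟨rfl, -⟩; exact hpp' rfl
    · rintro ⟨-, rfl⟩; exact hw.2.1 rfl
  · intro w hw habs
    simp only [Set.mem_diff, Set.mem_insert_iff, Set.mem_singleton_iff] at hw
    push_neg at hw
    by_contra hwq
    refine hSind p hpS w hw.1 (hG'adj p w habs ?_ ?_)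
    · rintro ⟨-, rfl⟩; exact hwq rfl
    · rintro ⟨rfl, -⟩; exact hqp rfl

end Aux
/-- If `G` is connected, edge-critical and triangle-free and `v` is bivalent,
then `G_v` is connected. -/
theorem stmt4 {V : Type} [Fintype V] (G : SimpleGraph V) (hconn : G.Connected)
    (hec : EdgeCritical G) (h3 : G.CliqueFree 3) (v : V) (hd : deg G v = 2) :
    (G.induce (closedNbhd G v)ᶜ).Connected := by
  classical
  obtain ⟨x, y, hxy, hN⟩ := Set.ncard_eq_two.mp hd
  have hvx : G.Adj v x := by rw [← SimpleGraph.mem_neighborSet, hN]; exact Or.inl rfl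
  have hvy : G.Adj v y := by rw [← SimpleGraph.mem_neighborSet, hN]; exact Or.inr rfl
  have hxyadj : ¬ G.Adj x y := by
    intro h
    exact h3 {v, x, y} (SimpleGraph.is3Clique_triple_iff.mpr ⟨hvx, hvy, h⟩)
  set W := (closedNbhd G v)ᶜ with hWdef
  have hWmem : ∀ w, w ∈ W ↔ w ≠ v ∧ w ≠ x ∧ w ≠ y := by
    intro w
    simp only [hWdef, closedNbhd, hN, Set.mem_compl_iff, Set.mem_insert_iff,
      Set.mem_singleton_iff]
    push_neg
    tauto
  have hWnadj : ∀ w ∈ W, ¬ G.Adj v w := by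
    intro w hw habs
    have : w ∈ G.neighborSet v := habs
    rw [hN] at this
    rcases this with rfl | rfl
    · exact ((hWmem w).mp hw).2.1 rfl
    · exact ((hWmem w).mp hw).2.2 rfl
  -- α ≥ 2
  have hα2 : 2 ≤ indepNumOld G := by
    have hind : ∀ a ∈ ({x, y} : Set V), ∀ b ∈ ({x, y} : Set V), ¬ G.Adj a b := by
      intro a ha b hb hab
      rcases ha with rfl | ha <;> rcases hb with rfl | hb
      · exact G.irrefl hab
      · rw [Set.mem_singleton_iff] at hb; subst hb; exact hxyadj hab
      · rw [Set.mem_singleton_iff] at ha; subst ha; exact hxyadj hab.symm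
      · rw [Set.mem_singleton_iff] at ha hb; subst ha; subst hb; exact G.irrefl hab
    have := ncard_le_indepNum G {x, y} hind
    rwa [Set.ncard_pair hxy] at this
  -- W is nonempty
  have hWne : W.Nonempty := by
    by_contra hemp
    rw [Set.not_nonempty_iff_eq_empty] at hemp
    have hall : ∀ w : V, w = v ∨ w = x ∨ w = y := by
      intro w
      by_contra hc
      push_neg at hc
      have : w ∈ W := (hWmem w).mpr hc
      rw [hemp] at this
      exact this
    obtain ⟨S, hSind, hScard⟩ := exists_max_indep (G.deleteEdges {s(v, x)})
    have hlt : indepNumOld G < indepNumOld (G.deleteEdges {s(v, x)}) :=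
      hec s(v, x) (G.mem_edgeSet.mpr hvx)
    have hS3 : 3 ≤ S.ncard := by omega
    have hsub : S ⊆ {v, x, y} := fun w _ => by
      rcases hall w with rfl | rfl | rfl <;> simp
    have hvS : v ∈ S := by
      by_contra hvS
      have : S ⊆ {x, y} := by
        intro w hw
        rcases hsub hw with rfl | hw2
        · exact absurd hw hvS
        · exact hw2
      have := Set.ncard_le_ncard this
      rw [Set.ncard_pair hxy] at this
      omega
    have hyS : y ∈ S := by
      by_contra hyS
      have : S ⊆ {v, x} := by
        intro w hw
        rcases hsub hw with rfl | hw2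
        · exact Or.inl rfl
        · rcases hw2 with rfl | hw3
          · exact Or.inr rfl
          · rw [Set.mem_singleton_iff] at hw3; exact absurd (hw3 ▸ hw) hyS
      have := Set.ncard_le_ncard this
      have h2 : ({v, x} : Set V).ncard ≤ 2 := by
        apply le_trans (Set.ncard_insert_le v {x})
        simp
      omega
    refine hSind v hvS y hyS ?_
    rw [SimpleGraph.deleteEdges_adj]
    refine ⟨hvy, ?_⟩
    simp only [Set.mem_singleton_iff, Sym2.eq_iff]
    push_neg
    constructor
    · rintro -; exact Ne.symm hxy
    · intro h; exact absurd h (G.ne_of_adj hvx)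
  -- now prove connectivity
  rw [SimpleGraph.connected_iff]
  refine ⟨?_, ⟨⟨hWne.choose, hWne.choose_spec⟩⟩⟩
  by_contra hpre
  rw [SimpleGraph.Preconnected] at hpre
  push_neg at hpre
  obtain ⟨a, b, hnr⟩ := hpre
  -- the component of a
  set A : Set V := {w : V | ∃ hw : w ∈ W, (G.induce W).Reachable a ⟨w, hw⟩} with hAdef
  have haA : (a : V) ∈ A := ⟨a.2, by rw [Subtype.coe_eta]⟩
  have hAW : A ⊆ W := fun w hw => hw.1
  have hbB : (b : V) ∈ W ∧ (b : V) ∉ A := by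
    refine ⟨b.2, ?_⟩
    rintro ⟨hb, hr⟩
    rw [Subtype.coe_eta] at hr
    exact hnr hr
  -- no edges between A and W \ A
  have hAB : ∀ u ∈ A, ∀ w, w ∈ W → w ∉ A → ¬ G.Adj u w := by
    rintro u ⟨hu, hru⟩ w hw hwA habs
    refine hwA ⟨hw, hru.trans (SimpleGraph.Adj.reachable ?_)⟩
    exact habs
  -- vertices adjacent from inside A (resp. B) to outside W land in {x, y}
  have hxW : x ∉ W := fun h => ((hWmem x).mp h).2.1 rfl
  have hyW : y ∉ W := fun h => ((hWmem y).mp h).2.2 rfl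
  have hvW : v ∉ W := fun h => ((hWmem v).mp h).1 rfl
  -- find a boundary edge from A
  have hbound : ∀ (C : Set V), C ⊆ W → C.Nonempty →
      (∀ u ∈ C, ∀ w, w ∈ W → w ∉ C → ¬ G.Adj u w) →
      ∃ p q, (p = x ∨ p = y) ∧ q ∈ C ∧ G.Adj p q := by
    intro C hCW hCne hCcl
    obtain ⟨c, hc⟩ := hCne
    have hvC : v ∉ C := fun h => hvW (hCW h)
    obtain ⟨wlk⟩ := hconn.preconnected c v
    obtain ⟨d, -, hd1, hd2⟩ := wlk.exists_boundary_dart C hc hvC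
    have hdadj : G.Adj d.toProd.1 d.toProd.2 := d.adj
    by_cases hw : d.toProd.2 ∈ W
    · exact absurd hdadj (hCcl _ hd1 _ hw hd2)
    · have := (hWmem d.toProd.2)
      rw [iff_iff_implies_and_implies] at this
      have hcases : d.toProd.2 = v ∨ d.toProd.2 = x ∨ d.toProd.2 = y := by
        by_contra hcon
        push_neg at hcon
        exact hw ((hWmem _).mpr hcon)
      rcases hcases with heq | heq | heq
      · -- adjacent to v: impossible since d.toProd.1 ∈ C ⊆ W
        exact absurd (heq ▸ hdadj).symm (hWnadj _ (hCW hd1))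
      · exact ⟨x, d.toProd.1, Or.inl rfl, hd1, (heq ▸ hdadj).symm⟩
      · exact ⟨y, d.toProd.1, Or.inr rfl, hd1, (heq ▸ hdadj).symm⟩
  -- symmetric-pair neighborhood fact
  have hNyx : G.neighborSet v = {y, x} := by rw [hN, Set.pair_comm]
  -- get P from a boundary edge of A
  obtain ⟨p₁, q₁, hp₁, hq₁A, hadj₁⟩ := hbound A hAW ⟨a, haA⟩
    (fun u hu w hw hwA => hAB u hu w hw hwA)
  have hq₁W : q₁ ∈ W := hAW hq₁A
  obtain ⟨P, hPW, hPind, hPcard, hPother, hPthis⟩ :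
      ∃ P : Set V, P ⊆ W ∧ (∀ a ∈ P, ∀ b ∈ P, ¬ G.Adj a b) ∧
        indepNumOld G + 1 ≤ P.ncard + 2 ∧
        (∀ w ∈ P, w ∉ A → ¬ G.Adj x w ∧ ¬ G.Adj y w) ∧ True := by
    rcases hp₁ with rfl | rfl
    · obtain ⟨P, h1, h2, h3', h4, h5⟩ := key G hec v p₁ y q₁ hN hxy hq₁W hadj₁
      exact ⟨P, h1, h2, h3',
        fun w hw hwA => ⟨fun h => hwA ((h5 w hw h) ▸ hq₁A), h4 w hw⟩, trivial⟩
    · obtain ⟨P, h1, h2, h3', h4, h5⟩ := key G hec v p₁ x q₁ hNyx (Ne.symm hxy) hq₁W hadj₁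
      refine ⟨P, h1, h2, h3', fun w hw hwA => ⟨fun h => h4 w hw h, fun h => ?_⟩, trivial⟩
      · exact hwA ((h5 w hw h) ▸ hq₁A)
  -- get R from a boundary edge of B := W \ A
  set B : Set V := W \ A with hBdef
  have hBW : B ⊆ W := Set.diff_subset
  have hBne : B.Nonempty := ⟨b, hbB.1, hbB.2⟩
  have hBcl : ∀ u ∈ B, ∀ w, w ∈ W → w ∉ B → ¬ G.Adj u w := by
    rintro u ⟨huW, huA⟩ w hw hwB habs
    have hwA : w ∈ A := by
      by_contra hcon
      exact hwB ⟨hw, hcon⟩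
    exact hAB w hwA u huW huA habs.symm
  obtain ⟨p₂, q₂, hp₂, hq₂B, hadj₂⟩ := hbound B hBW hBne hBcl
  have hq₂W : q₂ ∈ W := hBW hq₂B
  obtain ⟨R, hRW, hRind, hRcard, hRother, -⟩ :
      ∃ R : Set V, R ⊆ W ∧ (∀ a ∈ R, ∀ b ∈ R, ¬ G.Adj a b) ∧
        indepNumOld G + 1 ≤ R.ncard + 2 ∧
        (∀ w ∈ R, w ∈ A → ¬ G.Adj x w ∧ ¬ G.Adj y w) ∧ True := by
    rcases hp₂ with rfl | rfl
    · obtain ⟨R, h1, h2, h3', h4, h5⟩ := key G hec v p₂ y q₂ hN hxy hq₂W hadj₂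
      exact ⟨R, h1, h2, h3',
        fun w hw hwA => ⟨fun h => absurd ((h5 w hw h) ▸ hwA) hq₂B.2, fun h => h4 w hw h⟩, trivial⟩
    · obtain ⟨R, h1, h2, h3', h4, h5⟩ := key G hec v p₂ x q₂ hNyx (Ne.symm hxy) hq₂W hadj₂
      refine ⟨R, h1, h2, h3', fun w hw hwA => ⟨fun h => h4 w hw h, fun h => ?_⟩, trivial⟩
      · exact hq₂B.2 ((h5 w hw h) ▸ hwA)
  -- counting
  have hPsplit : (P ∩ A).ncard + (P \ A).ncard = P.ncard :=
    Set.ncard_inter_add_ncard_diff_eq_ncard P A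
  have hRsplit : (R ∩ A).ncard + (R \ A).ncard = R.ncard :=
    Set.ncard_inter_add_ncard_diff_eq_ncard R A
  -- mixed independent set M = {v} ∪ (P ∩ A) ∪ (R \ A)
  have hMind : ∀ c ∈ insert v ((P ∩ A) ∪ (R \ A)),
      ∀ d ∈ insert v ((P ∩ A) ∪ (R \ A)), ¬ G.Adj c d := by
    have hinW : ∀ w ∈ (P ∩ A) ∪ (R \ A), w ∈ W := by
      rintro w (⟨hw, -⟩ | ⟨hw, -⟩)
      · exact hPW hw
      · exact hRW hw
    have hcross : ∀ c ∈ (P ∩ A) ∪ (R \ A), ∀ d ∈ (P ∩ A) ∪ (R \ A), ¬ G.Adj c d := by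
      rintro c (⟨hcP, hcA⟩ | ⟨hcR, hcA⟩) d (⟨hdP, hdA⟩ | ⟨hdR, hdA⟩) habs
      · exact hPind c hcP d hdP habs
      · exact hAB c hcA d (hRW hdR) hdA habs
      · exact hAB d hdA c (hRW hcR) hcA habs.symm
      · exact hRind c hcR d hdR habs
    rintro c hc d hd habs
    rcases hc with rfl | hc
    · rcases hd with rfl | hd
      · exact G.irrefl habs
      · exact hWnadj d (hinW d hd) habs
    · rcases hd with rfl | hd
      · exact hWnadj c (hinW c hc) habs.symm
      · exact hcross c hc d hd habs
  have hMcard : (insert v ((P ∩ A) ∪ (R \ A))).ncard =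
      (P ∩ A).ncard + (R \ A).ncard + 1 := by
    rw [Set.ncard_insert_of_notMem, Set.ncard_union_eq]
    · exact Set.disjoint_left.mpr (fun w hw hw2 => hw2.2 hw.2)
    · rintro (⟨hw, -⟩ | ⟨hw, -⟩)
      · exact hvW (hPW hw)
      · exact hvW (hRW hw)
  have hM := ncard_le_indepNum G _ hMind
  rw [hMcard] at hM
  -- final independent set T = {x, y} ∪ (R ∩ A) ∪ (P \ A)
  have hTind : ∀ c ∈ insert x (insert y ((R ∩ A) ∪ (P \ A))),
      ∀ d ∈ insert x (insert y ((R ∩ A) ∪ (P \ A))), ¬ G.Adj c d := by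
    have hnox : ∀ w ∈ (R ∩ A) ∪ (P \ A), ¬ G.Adj x w ∧ ¬ G.Adj y w := by
      rintro w (⟨hwR, hwA⟩ | ⟨hwP, hwA⟩)
      · exact hRother w hwR hwA
      · exact hPother w hwP hwA
    have hcross : ∀ c ∈ (R ∩ A) ∪ (P \ A), ∀ d ∈ (R ∩ A) ∪ (P \ A), ¬ G.Adj c d := by
      rintro c (⟨hcR, hcA⟩ | ⟨hcP, hcA⟩) d (⟨hdR, hdA⟩ | ⟨hdP, hdA⟩) habs
      · exact hRind c hcR d hdR habs
      · exact hAB c hcA d (hPW hdP) hdA habs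
      · exact hAB d hdA c (hPW hcP) hcA habs.symm
      · exact hPind c hcP d hdP habs
    rintro c hc d hd habs
    rcases hc with rfl | rfl | hc
    · rcases hd with rfl | rfl | hd
      · exact G.irrefl habs
      · exact hxyadj habs
      · exact (hnox d hd).1 habs
    · rcases hd with rfl | rfl | hd
      · exact hxyadj habs.symm
      · exact G.irrefl habs
      · exact (hnox d hd).2 habs
    · rcases hd with rfl | rfl | hd
      · exact (hnox c hc).1 habs.symm
      · exact (hnox c hc).2 habs.symm
      · exact hcross c hc d hd habs
  have hsubW : (R ∩ A) ∪ (P \ A) ⊆ W := by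
    rintro w (⟨hw, -⟩ | ⟨hw, -⟩)
    · exact hRW hw
    · exact hPW hw
  have hTcard : (insert x (insert y ((R ∩ A) ∪ (P \ A)))).ncard =
      (R ∩ A).ncard + (P \ A).ncard + 2 := by
    rw [Set.ncard_insert_of_notMem, Set.ncard_insert_of_notMem, Set.ncard_union_eq]
    · exact Set.disjoint_left.mpr (fun w hw hw2 => hw2.2 hw.2)
    · intro hw
      exact hyW (hsubW hw)
    · rintro (rfl | hw)
      · exact hxy rfl
      · exact hxW (hsubW hw)
  have hT := ncard_le_indepNum G _ hTind
  rw [hTcard] at hT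
  omega
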